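/- arXiv:2405.11452 — 2 statements merged into one kernel-verified Lean document; each statement's English description precedes it below -/
import Mathlib

section
/- Let $q \ge 1$ and let $\theta : \mathbb{Z} \to [0,\infty)$ with $\sum_{v \in \mathbb{Z}} \theta(v)^q < \infty$ and $\theta(v) \le 1$ for all $|v| \ge K$ for some $K$. Then for every integer $1 \le l \le q-1$ (assuming $q \ge 2$), $n^{-1 + l/q} \sum_{|v| \le n} \theta(v)^l \to 0$ as $n \to \infty$. -/
open Filter Finset

/-- Hölder with constant function: `∑ f ≤ (∑ f^p)^(1/p) * card^(1-1/p)`. -/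
lemma holder_card {ι : Type*} (s : Finset ι) (f : ι → ℝ) (hf : ∀ v, 0 ≤ f v)
    {p : ℝ} (hp : 1 < p) :
    ∑ v ∈ s, f v ≤ (∑ v ∈ s, f v ^ p) ^ (1 / p) * (s.card : ℝ) ^ (1 - 1 / p) := by
  have hp0 : p ≠ 0 := by positivity
  have hpq : Real.HolderConjugate p (1 - 1/p)⁻¹ := by
    rw [Real.holderConjugate_iff_eq_conjExponent hp, one_sub_div hp0, inv_div]
  have h := Real.inner_le_Lp_mul_Lq_of_nonneg (s := s) (f := f) (g := fun _ => 1) hpq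
    (fun i _ => hf i) (fun i _ => zero_le_one)
  simp only [mul_one, Real.one_rpow, Finset.sum_const, nsmul_eq_mul] at h
  have h1 : (1 : ℝ) / (1 - 1/p)⁻¹ = 1 - 1/p := by rw [one_div, inv_inv]
  rw [h1] at h
  exact h

/-- Key analytic estimate: if `θ ∈ ℓ^q` (and `θ ≤ 1` off a finite window), then for
`1 ≤ l ≤ q - 1`, `n^{-1+l/q} ∑_{|v| ≤ n} θ(v)^l → 0`. -/
theorem fractional_power_partial_sums_tendsto_zero
    (q : ℕ) (hq : 1 ≤ q) (l : ℕ) (hl1 : 1 ≤ l) (hlq : l ≤ q - 1)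
    (θ : ℤ → ℝ) (hθ0 : ∀ v, 0 ≤ θ v)
    (hsum : Summable fun v : ℤ => θ v ^ q)
    (K : ℕ) (hK : ∀ v : ℤ, K ≤ v.natAbs → θ v ≤ 1) :
    Tendsto (fun n : ℕ =>
        (n : ℝ) ^ (-1 + (l : ℝ) / q) * ∑ v ∈ Finset.Icc (-(n : ℤ)) n, θ v ^ l)
      atTop (nhds 0) := by

  have hlq' : l < q := by omega
  have hq0 : (0:ℝ) < q := by positivity
  have hl0 : (0:ℝ) < l := by positivity
  have hp : 1 < (q:ℝ) / l := by
    rw [lt_div_iff₀ hl0]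
    exact_mod_cast by omega
  have hexp0 : (0:ℝ) ≤ 1 - (l:ℝ)/q := by
    rw [sub_nonneg, div_le_one hq0]; exact_mod_cast hlq'.le
  have hexp1 : (1:ℝ) - (l:ℝ)/q ≤ 1 := by
    have : (0:ℝ) ≤ (l:ℝ)/q := by positivity
    linarith
  -- rewrite the inverse exponent
  have hinv : 1 / ((q:ℝ)/l) = (l:ℝ)/q := by
    rw [one_div, inv_div]
  rw [Metric.tendsto_atTop]
  intro ε hε
  set δ : ℝ := (ε/6) ^ ((q:ℝ)/l) with hδdef
  have hδ : 0 < δ := Real.rpow_pos_of_pos (by linarith) _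
  have hkey : ∀ x : ℝ, 0 ≤ x → x ≤ δ → x ^ ((l:ℝ)/q) ≤ ε/6 := by
    intro x hx hxδ
    calc x ^ ((l:ℝ)/q) ≤ δ ^ ((l:ℝ)/q) := Real.rpow_le_rpow hx hxδ (by positivity)
    _ = (ε/6) ^ (((q:ℝ)/l) * ((l:ℝ)/q)) := by
        rw [hδdef, ← Real.rpow_mul (by linarith)]
    _ = ε/6 := by
        rw [div_mul_div_comm, mul_comm, div_self (by positivity), Real.rpow_one]
  -- tail smallness
  obtain ⟨s₀, hs₀⟩ := summable_iff_vanishing.mp hsum (Set.Iio δ) (Iio_mem_nhds hδ)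
  set M : ℕ := s₀.sup Int.natAbs with hMdef
  have hs₀sub : s₀ ⊆ Finset.Icc (-(M:ℤ)) M := by
    intro v hv
    have : v.natAbs ≤ M := Finset.le_sup hv
    simp only [Finset.mem_Icc]
    omega
  set A : ℝ := ∑ v ∈ Finset.Icc (-(M:ℤ)) M, θ v ^ l with hAdef
  have hA0 : 0 ≤ A := Finset.sum_nonneg fun v _ => pow_nonneg (hθ0 v) l
  -- head tends to zero
  have hhead : Tendsto (fun n : ℕ => (n:ℝ) ^ (-1 + (l:ℝ)/q) * A) atTop (nhds 0) := by
    have hy : 0 < 1 - (l:ℝ)/q := by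
      rw [sub_pos, div_lt_one hq0]; exact_mod_cast hlq'
    have h1 : Tendsto (fun x : ℝ => x ^ (-(1 - (l:ℝ)/q))) atTop (nhds 0) :=
      tendsto_rpow_neg_atTop hy
    have h2 : Tendsto (fun n : ℕ => ((n:ℝ)) ^ (-(1 - (l:ℝ)/q))) atTop (nhds 0) :=
      h1.comp tendsto_natCast_atTop_atTop
    have h3 := h2.mul_const A
    rw [zero_mul] at h3
    convert h3 using 3 with n
    ring_nf
  obtain ⟨N₁, hN₁⟩ := (Metric.tendsto_atTop.mp hhead) (ε/2) (by linarith)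
  refine ⟨max (max N₁ M) 1, fun n hn => ?_⟩
  have hnN₁ : N₁ ≤ n := le_trans (le_trans (le_max_left _ _) (le_max_left _ _)) hn
  have hnM : M ≤ n := le_trans (le_trans (le_max_right _ _) (le_max_left _ _)) hn
  have hn1 : 1 ≤ n := le_trans (le_max_right _ _) hn
  have hnpos : (0:ℝ) < n := by exact_mod_cast hn1
  set c : ℝ := (n:ℝ) ^ (-1 + (l:ℝ)/q) with hcdef
  have hc0 : 0 ≤ c := Real.rpow_nonneg hnpos.le _
  -- split the sum
  have hsub : Finset.Icc (-(M:ℤ)) M ⊆ Finset.Icc (-(n:ℤ)) n := by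
    intro v hv
    simp only [Finset.mem_Icc] at *
    omega
  set t : Finset ℤ := Finset.Icc (-(n:ℤ)) n \ Finset.Icc (-(M:ℤ)) M with htdef
  have hsplit : ∑ v ∈ Finset.Icc (-(n:ℤ)) n, θ v ^ l = (∑ v ∈ t, θ v ^ l) + A :=
    (Finset.sum_sdiff hsub).symm
  set B : ℝ := ∑ v ∈ t, θ v ^ l with hBdef
  have hB0 : 0 ≤ B := Finset.sum_nonneg fun v _ => pow_nonneg (hθ0 v) l
  -- tail estimate via Hölder
  have hdisj : Disjoint t s₀ := Finset.sdiff_disjoint.mono_right hs₀sub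
  have htail : ∑ v ∈ t, θ v ^ q < δ := by
    have := hs₀ t hdisj
    simpa using this
  have hpowrw : ∀ v : ℤ, (θ v ^ l) ^ ((q:ℝ)/l) = θ v ^ q := by
    intro v
    rw [← Real.rpow_natCast (θ v) l, ← Real.rpow_mul (hθ0 v), ← Real.rpow_natCast (θ v) q]
    congr 1
    field_simp
  have hholder : B ≤ (ε/6) * (t.card : ℝ) ^ (1 - (l:ℝ)/q) := by
    have h := holder_card t (fun v => θ v ^ l) (fun v => pow_nonneg (hθ0 v) l) hp
    simp only [hpowrw, hinv] at h
    refine le_trans h (mul_le_mul_of_nonneg_right ?_ (Real.rpow_nonneg (by positivity) _))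
    exact hkey _ (Finset.sum_nonneg fun v _ => pow_nonneg (hθ0 v) q) htail.le
  have hcard : (t.card : ℝ) ≤ 3 * n := by
    have h1 : t.card ≤ (Finset.Icc (-(n:ℤ)) n).card := Finset.card_le_card (Finset.sdiff_subset)
    have h2 : (Finset.Icc (-(n:ℤ)) n).card = 2*n + 1 := by
      rw [Int.card_Icc]
      omega
    have : (t.card : ℝ) ≤ 2*n + 1 := by exact_mod_cast h1.trans_eq h2
    have h3 : (n:ℝ) ≥ 1 := by exact_mod_cast hn1
    linarith
  have htailbound : c * B ≤ ε/2 := by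
    have h1 : (t.card : ℝ) ^ (1 - (l:ℝ)/q) ≤ (3*(n:ℝ)) ^ (1 - (l:ℝ)/q) :=
      Real.rpow_le_rpow (by positivity) hcard hexp0
    have h2 : (3*(n:ℝ)) ^ (1 - (l:ℝ)/q) = 3 ^ (1 - (l:ℝ)/q) * (n:ℝ) ^ (1 - (l:ℝ)/q) :=
      Real.mul_rpow (by norm_num) hnpos.le
    have h3 : (3:ℝ) ^ (1 - (l:ℝ)/q) ≤ 3 := by
      calc (3:ℝ) ^ (1 - (l:ℝ)/q) ≤ 3 ^ (1:ℝ) :=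
        Real.rpow_le_rpow_of_exponent_le (by norm_num) hexp1
      _ = 3 := Real.rpow_one 3
    have h4 : c * (n:ℝ) ^ (1 - (l:ℝ)/q) = 1 := by
      rw [hcdef, ← Real.rpow_add hnpos]
      norm_num
    calc c * B ≤ c * ((ε/6) * (t.card : ℝ) ^ (1 - (l:ℝ)/q)) :=
          mul_le_mul_of_nonneg_left hholder hc0
      _ ≤ c * ((ε/6) * ((3:ℝ) ^ (1 - (l:ℝ)/q) * (n:ℝ) ^ (1 - (l:ℝ)/q))) := by
          refine mul_le_mul_of_nonneg_left ?_ hc0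
          refine mul_le_mul_of_nonneg_left ?_ (by linarith)
          rw [← h2]; exact h1
      _ = (ε/6) * (3:ℝ) ^ (1 - (l:ℝ)/q) * (c * (n:ℝ) ^ (1 - (l:ℝ)/q)) := by ring
      _ = (ε/6) * (3:ℝ) ^ (1 - (l:ℝ)/q) := by rw [h4, mul_one]
      _ ≤ (ε/6) * 3 := mul_le_mul_of_nonneg_left h3 (by linarith)
      _ = ε/2 := by ring
  have hheadbound : c * A < ε/2 := by
    have := hN₁ n hnN₁
    rw [Real.dist_eq, sub_zero, abs_of_nonneg (mul_nonneg hc0 hA0)] at this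
    exact this
  rw [Real.dist_eq, sub_zero, hsplit]
  rw [abs_of_nonneg (mul_nonneg hc0 (by linarith))]
  calc c * (B + A) = c * B + c * A := by ring
    _ < ε/2 + ε/2 := by
        have := add_lt_add_of_le_of_lt htailbound hheadbound
        linarith
    _ = ε := by ring
end

section
/- Fix $n \ge 1$ and $k$ with $1 \le |k| \le n-1$. For $s,t \in [0,1]$ define $f_{kn}(s,t) = \frac{\lfloor ns \rfloor}{n} - (t \wedge s) + (t \wedge s)\frac{|k|}{n} + \frac{k}{n}\mathbf{1}_{\{k \le -1\}}$ if $t - s > \frac{k}{n}$, and $f_{kn}(s,t) = \frac{\lfloor nt \rfloor}{n} - (t \wedge s) + (t \wedge s)\frac{|k|}{n} - \frac{k}{n}\mathbf{1}_{\{k \ge 1\}}$ if $t - s \le \frac{k}{n}$. Then $\sup_{s,t \in [0,1]} |f_{kn}(s,t)| \le \frac{3|k|}{n}$. -/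
/-- Uniform bound (B.14) on the kernels `f_{kn}` of Lemma B.2:
`sup_{s,t ∈ [0,1]} |f_{kn}(s,t)| ≤ 3|k|/n`. -/
theorem kernel_fkn_bound (n : ℕ) (hn : 1 ≤ n) (k : ℤ)
    (hk1 : 1 ≤ |k|) (hkn : |k| ≤ (n : ℤ) - 1) :
    ∀ s ∈ Set.Icc (0:ℝ) 1, ∀ t ∈ Set.Icc (0:ℝ) 1,
      |if t - s > (k : ℝ) / n then
          (⌊(n : ℝ) * s⌋ : ℝ) / n - min t s + min t s * |(k : ℝ)| / n +
            (if k ≤ -1 then (k : ℝ) / n else 0)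
        else
          (⌊(n : ℝ) * t⌋ : ℝ) / n - min t s + min t s * |(k : ℝ)| / n -
            (if 1 ≤ k then (k : ℝ) / n else 0)| ≤ 3 * |(k : ℝ)| / n := by
  intro s hs t ht
  obtain ⟨hs0, hs1⟩ := hs
  obtain ⟨ht0, ht1⟩ := ht
  have hn0 : (0:ℝ) < n := by exact_mod_cast hn
  have hne : (n:ℝ) ≠ 0 := ne_of_gt hn0
  have hfs1 : ((⌊(n:ℝ)*s⌋ : ℤ) : ℝ) ≤ (n:ℝ)*s := Int.floor_le _
  have hfs2 : (n:ℝ)*s < (⌊(n:ℝ)*s⌋ : ℝ) + 1 := Int.lt_floor_add_one _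
  have hft1 : ((⌊(n:ℝ)*t⌋ : ℤ) : ℝ) ≤ (n:ℝ)*t := Int.floor_le _
  have hft2 : (n:ℝ)*t < (⌊(n:ℝ)*t⌋ : ℝ) + 1 := Int.lt_floor_add_one _
  rcases le_or_gt k 0 with hk | hk
  · -- k ≤ -1
    have hk' : k ≤ -1 := by
      rcases eq_or_lt_of_le hk with rfl | h
      · simp at hk1
      · omega
    have hkR : (k:ℝ) ≤ -1 := by exact_mod_cast hk'
    have habs : |(k:ℝ)| = -(k:ℝ) := abs_of_nonpos (by linarith)
    rw [habs, if_pos hk', if_neg (show ¬ (1:ℤ) ≤ k by omega)]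
    split_ifs with h
    · -- t - s > k/n
      have hts : (k:ℝ) < (t - s) * n := (div_lt_iff₀ hn0).mp h
      rcases le_total t s with hm | hm
      · rw [min_eq_left hm]
        have hX : ((⌊(n:ℝ)*s⌋ : ℝ)) / n - t + t * -(k:ℝ) / n + (k:ℝ)/n
            = ((⌊(n:ℝ)*s⌋ : ℝ) - n*t + t * -(k:ℝ) + k) / n := by
          field_simp
        rw [hX, abs_div, abs_of_pos hn0]
        gcongr
        rw [abs_le]
        constructor
        · linarith [mul_nonneg ht0 (show (0:ℝ) ≤ -k by linarith),
            mul_nonneg (show (0:ℝ) ≤ s - t by linarith) hn0.le]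
        · linarith [mul_nonneg (show (0:ℝ) ≤ 1 - t by linarith)
            (show (0:ℝ) ≤ -k by linarith)]
      · rw [min_eq_right hm]
        have hX : ((⌊(n:ℝ)*s⌋ : ℝ)) / n - s + s * -(k:ℝ) / n + (k:ℝ)/n
            = ((⌊(n:ℝ)*s⌋ : ℝ) - n*s + s * -(k:ℝ) + k) / n := by
          field_simp
        rw [hX, abs_div, abs_of_pos hn0]
        gcongr
        rw [abs_le]
        constructor
        · linarith [mul_nonneg hs0 (show (0:ℝ) ≤ -k by linarith)]
        · linarith [mul_nonneg (show (0:ℝ) ≤ 1 - s by linarith)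
            (show (0:ℝ) ≤ -k by linarith)]
    · -- t - s ≤ k/n, so t < s
      push_neg at h
      have hts : (t - s) * n ≤ (k:ℝ) := by
        exact (le_div_iff₀ hn0).mp h
      have htls : t ≤ s := by
        by_contra hc
        push_neg at hc
        nlinarith [mul_le_mul_of_nonneg_right (show (0:ℝ) ≤ t - s by linarith) hn0.le]
      rw [min_eq_left htls]
      have hX : ((⌊(n:ℝ)*t⌋ : ℝ)) / n - t + t * -(k:ℝ) / n - 0
          = ((⌊(n:ℝ)*t⌋ : ℝ) - n*t + t * -(k:ℝ)) / n := by
        field_simp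
        ring
      rw [hX, abs_div, abs_of_pos hn0]
      gcongr
      rw [abs_le]
      constructor
      · linarith [mul_nonneg ht0 (show (0:ℝ) ≤ -k by linarith)]
      · linarith [mul_nonneg (show (0:ℝ) ≤ 1 - t by linarith)
          (show (0:ℝ) ≤ -k by linarith)]
  · -- 1 ≤ k
    have hk' : 1 ≤ k := hk
    have hkR : (1:ℝ) ≤ (k:ℝ) := by exact_mod_cast hk'
    have habs : |(k:ℝ)| = (k:ℝ) := abs_of_pos (by linarith)
    rw [habs, if_neg (show ¬ k ≤ -1 by omega), if_pos hk']
    split_ifs with h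
    · -- t - s > k/n > 0, so s < t
      have hts : (k:ℝ) < (t - s) * n := (div_lt_iff₀ hn0).mp h
      have hst : s ≤ t := by
        by_contra hc
        push_neg at hc
        nlinarith [mul_le_mul_of_nonneg_right (show t - s ≤ (0:ℝ) by linarith) hn0.le]
      rw [min_eq_right hst]
      have hX : ((⌊(n:ℝ)*s⌋ : ℝ)) / n - s + s * (k:ℝ) / n + 0
          = ((⌊(n:ℝ)*s⌋ : ℝ) - n*s + s * (k:ℝ)) / n := by
        field_simp
        ring
      rw [hX, abs_div, abs_of_pos hn0]
      gcongr
      rw [abs_le]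
      constructor
      · linarith [mul_nonneg hs0 (show (0:ℝ) ≤ (k:ℝ) by linarith)]
      · linarith [mul_nonneg (show (0:ℝ) ≤ 1 - s by linarith)
          (show (0:ℝ) ≤ (k:ℝ) by linarith)]
    · push_neg at h
      have hts : (t - s) * n ≤ (k:ℝ) := by
        exact (le_div_iff₀ hn0).mp h
      rcases le_total t s with hm | hm
      · rw [min_eq_left hm]
        have hX : ((⌊(n:ℝ)*t⌋ : ℝ)) / n - t + t * (k:ℝ) / n - (k:ℝ)/n
            = ((⌊(n:ℝ)*t⌋ : ℝ) - n*t + t * (k:ℝ) - k) / n := by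
          field_simp
        rw [hX, abs_div, abs_of_pos hn0]
        gcongr
        rw [abs_le]
        constructor
        · linarith [mul_nonneg ht0 (show (0:ℝ) ≤ (k:ℝ) by linarith)]
        · linarith [mul_nonneg (show (0:ℝ) ≤ 1 - t by linarith)
            (show (0:ℝ) ≤ (k:ℝ) by linarith)]
      · rw [min_eq_right hm]
        have hX : ((⌊(n:ℝ)*t⌋ : ℝ)) / n - s + s * (k:ℝ) / n - (k:ℝ)/n
            = ((⌊(n:ℝ)*t⌋ : ℝ) - n*s + s * (k:ℝ) - k) / n := by
          field_simp
        rw [hX, abs_div, abs_of_pos hn0]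
        gcongr
        rw [abs_le]
        constructor
        · linarith [mul_nonneg hs0 (show (0:ℝ) ≤ (k:ℝ) by linarith),
            mul_nonneg (show (0:ℝ) ≤ t - s by linarith) hn0.le]
        · linarith [mul_nonneg (show (0:ℝ) ≤ 1 - s by linarith)
            (show (0:ℝ) ≤ (k:ℝ) by linarith)]
end
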